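/- Let n be a positive integer, η > 0, Y ∈ ℝⁿ, and let K_x ∈ ℝ^{n×n} be symmetric with an orthonormal basis of eigenvectors q₁,…,q_n and eigenvalues λ₁,…,λ_n satisfying λ_i > 0 for all i. Suppose c : ℝ → ℝ and v : ℝ → ℝⁿ are differentiable and satisfy dc/dt = −(η/n)·⟨E_t, v_t⟩ and dv/dt = −(η/n)·c_t·(K_x E_t), with F_t = c_t·v_t and E_t = F_t − Y. Fix a time t, and assume ⟨E_t, q_i⟩·⟨F_t, q_i⟩ ≤ 0 for all i, with strict inequality for at least one i. Then d(c_t²)/dt > 0 and d(‖v_t‖²)/dt > 0. -/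

import Mathlib

open Matrix

/-- Phase-I mechanism: if along every kernel eigendirection the error and
output components have opposite signs (strictly for at least one direction),
then both `c²` and `‖v‖²` are strictly increasing under gradient flow. -/
theorem phase_I_c_sq_v_sq_increase
    (n : ℕ) (hn : 0 < n) (η : ℝ) (hη : 0 < η)
    (Y : Fin n → ℝ) (Kx : Matrix (Fin n) (Fin n) ℝ) (hK : Kx.IsSymm)
    (q : Fin n → Fin n → ℝ) (lam : Fin n → ℝ)
    (horth : ∀ i j, q i ⬝ᵥ q j = if i = j then (1 : ℝ) else 0)
    (heig : ∀ i, Kx.mulVec (q i) = lam i • q i)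
    (hlam : ∀ i, 0 < lam i)
    (c : ℝ → ℝ) (v : ℝ → Fin n → ℝ)
    (F E : ℝ → Fin n → ℝ)
    (hF : ∀ t, F t = c t • v t) (hE : ∀ t, E t = F t - Y)
    (hc : ∀ t, HasDerivAt c (-(η / n) * (E t ⬝ᵥ v t)) t)
    (hv : ∀ t, HasDerivAt v (-((η / n) * c t) • Kx.mulVec (E t)) t)
    (t : ℝ)
    (hsign : ∀ i, (E t ⬝ᵥ q i) * (F t ⬝ᵥ q i) ≤ 0)
    (hstrict : ∃ i, (E t ⬝ᵥ q i) * (F t ⬝ᵥ q i) < 0) :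
    0 < deriv (fun s => c s ^ 2) t ∧ 0 < deriv (fun s => v s ⬝ᵥ v s) t := by
  have hnpos : (0:ℝ) < n := Nat.cast_pos.mpr hn
  have hcoef : 0 < 2 * (η / n) := by positivity
  -- orthonormality as matrix identities
  set M : Matrix (Fin n) (Fin n) ℝ := Matrix.of q with hM
  have hMMt : M * Mᵀ = 1 := by
    ext i j
    simpa [Matrix.mul_apply, Matrix.one_apply, dotProduct, hM] using horth i j
  have hMtM : Mᵀ * M = 1 := mul_eq_one_comm.mp hMMt
  have parseval : ∀ a b : Fin n → ℝ,
      a ⬝ᵥ b = ∑ i, (q i ⬝ᵥ a) * (q i ⬝ᵥ b) := by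
    intro a b
    have h1 : a ⬝ᵥ b = a ⬝ᵥ ((Mᵀ * M) *ᵥ b) := by rw [hMtM, Matrix.one_mulVec]
    rw [h1, ← Matrix.mulVec_mulVec, Matrix.dotProduct_mulVec, Matrix.vecMul_transpose]
    simp [dotProduct, Matrix.mulVec, hM, mul_comm]
  have hKq : ∀ (i : Fin n) (x : Fin n → ℝ),
      q i ⬝ᵥ (Kx *ᵥ x) = lam i * (q i ⬝ᵥ x) := by
    intro i x
    rw [Matrix.dotProduct_mulVec, ← Matrix.mulVec_transpose, hK.eq, heig i,
      smul_dotProduct]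
    rfl
  -- sums are negative
  have hsum1 : ∑ i, (q i ⬝ᵥ E t) * (q i ⬝ᵥ F t) < 0 := by
    obtain ⟨i₀, hi₀⟩ := hstrict
    have := Finset.sum_lt_sum (s := Finset.univ)
      (f := fun i => (q i ⬝ᵥ E t) * (q i ⬝ᵥ F t)) (g := fun _ => (0:ℝ))
      (fun i _ => by rw [dotProduct_comm (q i) (E t), dotProduct_comm (q i) (F t)]; exact hsign i)
      ⟨i₀, Finset.mem_univ _, by rw [dotProduct_comm (q i₀) (E t), dotProduct_comm (q i₀) (F t)]; exact hi₀⟩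
    simpa using this
  have hsum2 : ∑ i, lam i * ((q i ⬝ᵥ E t) * (q i ⬝ᵥ F t)) < 0 := by
    obtain ⟨i₀, hi₀⟩ := hstrict
    have := Finset.sum_lt_sum (s := Finset.univ)
      (f := fun i => lam i * ((q i ⬝ᵥ E t) * (q i ⬝ᵥ F t))) (g := fun _ => (0:ℝ))
      (fun i _ => mul_nonpos_of_nonneg_of_nonpos (hlam i).le
        (by rw [dotProduct_comm (q i) (E t), dotProduct_comm (q i) (F t)]; exact hsign i))
      ⟨i₀, Finset.mem_univ _, mul_neg_of_pos_of_neg (hlam i₀)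
        (by rw [dotProduct_comm (q i₀) (E t), dotProduct_comm (q i₀) (F t)]; exact hi₀)⟩
    simpa using this
  constructor
  · have h1 : HasDerivAt (fun s => c s ^ 2)
        ((2:ℕ) * c t ^ 1 * (-(η / n) * (E t ⬝ᵥ v t))) t := (hc t).pow 2
    rw [h1.deriv]
    have hEv : c t * (E t ⬝ᵥ v t) = E t ⬝ᵥ F t := by
      rw [hF, dotProduct_smul, smul_eq_mul]
    have : ((2:ℕ):ℝ) * c t ^ 1 * (-(η / n) * (E t ⬝ᵥ v t))
        = -(2 * (η / n)) * (E t ⬝ᵥ F t) := by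
      rw [← hEv]; push_cast; ring
    rw [this, parseval]
    nlinarith [hsum1]
  · have hd := hv t
    set d : Fin n → ℝ := -((η / n) * c t) • Kx.mulVec (E t) with hdd
    have hvj : ∀ j, HasDerivAt (fun s => v s j) (d j) t :=
      fun j => hasDerivAt_pi.mp hd j
    have h2 : HasDerivAt (fun s => v s ⬝ᵥ v s)
        (∑ j, (d j * v t j + v t j * d j)) t := by
      simp only [dotProduct]
      exact HasDerivAt.fun_sum (fun j _ => (hvj j).mul (hvj j))
    rw [h2.deriv]
    have hsum : ∑ j, (d j * v t j + v t j * d j) = 2 * (v t ⬝ᵥ d) := by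
      simp [dotProduct, Finset.mul_sum]; ring_nf
      simp [mul_comm, two_mul, Finset.sum_add_distrib]
    have hvd : v t ⬝ᵥ d = -(η / n) * (F t ⬝ᵥ (Kx *ᵥ E t)) := by
      rw [hdd, dotProduct_smul, smul_eq_mul, hF, smul_dotProduct, smul_eq_mul]
      ring
    have hFK : F t ⬝ᵥ (Kx *ᵥ E t)
        = ∑ i, lam i * ((q i ⬝ᵥ E t) * (q i ⬝ᵥ F t)) := by
      rw [parseval]
      refine Finset.sum_congr rfl fun i _ => ?_
      rw [hKq]; ring
    rw [hsum, hvd, hFK]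
    nlinarith [hsum2]
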